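/- Let s ∈ ℝ, p ∈ (0,∞), q ∈ (p,∞), and τ ∈ (0, 1/p - 1/q]. Then the sequence space ḃ^{s, τ+1/q-1/p}_{q,q}(ℝⁿ) is continuously embedded in ḟ^{s,τ}_{p,q}(ℝⁿ), and the embedding is proper: there exists a sequence t with ‖t‖_{ḟ^{s,τ}_{p,q}} < ∞ but ‖t‖_{ḃ^{s,τ+1/q-1/p}_{q,q}} = ∞. -/

import Mathlib

open MeasureTheory ENNReal

/-- A dyadic cube `Q_{jk} = 2^{-j}([0,1)^n + k)` in `ℝⁿ`, recorded by its
generation `j ∈ ℤ` and position `k ∈ ℤⁿ`. -/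
structure DyadicCube (n : ℕ) where
  j : ℤ
  k : Fin n → ℤ

namespace DyadicCube

/-- The dyadic cube as a subset of `ℝⁿ`. -/
def toSet {n : ℕ} (Q : DyadicCube n) : Set (Fin n → ℝ) :=
  {x | ∀ i, (Q.k i : ℝ) * (2 : ℝ) ^ (-Q.j) ≤ x i ∧
        x i < ((Q.k i : ℝ) + 1) * (2 : ℝ) ^ (-Q.j)}

/-- The Lebesgue measure `|Q| = 2^{-jn}` of a dyadic cube, as an element of `ℝ≥0∞`. -/
noncomputable def vol {n : ℕ} (Q : DyadicCube n) : ℝ≥0∞ :=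
  (2 : ℝ≥0∞) ^ (-(Q.j : ℝ) * n)

/-- The characteristic function `χ_Q`, with values in `ℝ≥0∞`. -/
noncomputable def ind {n : ℕ} (Q : DyadicCube n) (x : Fin n → ℝ) : ℝ≥0∞ :=
  Q.toSet.indicator (fun _ => (1 : ℝ≥0∞)) x

end DyadicCube

open DyadicCube

/-- The coefficient `|Q|^{-s/n - 1/2}`. -/
noncomputable def coeff {n : ℕ} (s : ℝ) (Q : DyadicCube n) : ℝ≥0∞ :=
  Q.vol ^ (-(s / (n : ℝ)) - 1 / 2)

/-- The `ℓ^q`-norm `(Σ_i a_i^q)^{1/q}` of a family of extended nonnegative reals,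
with the usual modification (`sup`) when `q = ∞`. -/
noncomputable def lqSum {ι : Type*} (q : ℝ≥0∞) (a : ι → ℝ≥0∞) : ℝ≥0∞ :=
  if q = ∞ then ⨆ i, a i else (∑' i, a i ^ q.toReal) ^ (1 / q.toReal)

/-- The `L^p`-norm `(∫_A g^p dx)^{1/p}` over a set `A ⊆ ℝⁿ`, with the usual
modification (`sup` over `x ∈ A`) when `p = ∞`. -/
noncomputable def lpIntOn {n : ℕ} (p : ℝ≥0∞) (A : Set (Fin n → ℝ))
    (g : (Fin n → ℝ) → ℝ≥0∞) : ℝ≥0∞ :=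
  if p = ∞ then ⨆ x ∈ A, g x
  else (∫⁻ x in A, g x ^ p.toReal) ^ (1 / p.toReal)

/-- The Triebel–Lizorkin-type sequence norm
`‖t‖_{ḟ^{s,τ}_{p,q}} = sup_P |P|^{-τ} ( ∫_P ( Σ_{Q ⊆ P} [|Q|^{-s/n-1/2} |t_Q| χ_Q(x)]^q )^{p/q} dx )^{1/p}`,
with the usual modifications when `p = ∞` or `q = ∞`. -/
noncomputable def fNorm (n : ℕ) (s τ : ℝ) (p q : ℝ≥0∞) (t : DyadicCube n → ℂ) : ℝ≥0∞ :=
  ⨆ P : DyadicCube n, P.vol ^ (-τ) *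
    lpIntOn p P.toSet fun x =>
      lqSum q fun Q : {Q : DyadicCube n // Q.toSet ⊆ P.toSet} =>
        coeff s Q.1 * ‖t Q.1‖₊ * ind Q.1 x

/-- The Besov-type sequence norm
`‖t‖_{ḃ^{s,τ}_{p,q}} = sup_P |P|^{-τ} ( Σ_{j ≥ j_P} ( ∫_P [ Σ_{Q ⊆ P, ℓ(Q)=2^{-j}} |Q|^{-s/n-1/2} |t_Q| χ_Q(x) ]^p dx )^{q/p} )^{1/q}`,
with the usual modifications when `p = ∞` or `q = ∞`. -/
noncomputable def bNorm (n : ℕ) (s τ : ℝ) (p q : ℝ≥0∞) (t : DyadicCube n → ℂ) : ℝ≥0∞ :=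
  ⨆ P : DyadicCube n, P.vol ^ (-τ) *
    lqSum q fun j : {j : ℤ // P.j ≤ j} =>
      lpIntOn p P.toSet fun x =>
        ∑' Q : {Q : DyadicCube n // Q.toSet ⊆ P.toSet ∧ Q.j = j.1},
          coeff s Q.1 * ‖t Q.1‖₊ * ind Q.1 x

/-- The `ḟ^{σ}_{∞,∞} = ḃ^{σ}_{∞,∞}` sequence norm `sup_Q |Q|^{-σ/n - 1/2} |t_Q|`. -/
noncomputable def supNorm (n : ℕ) (σ : ℝ) (t : DyadicCube n → ℂ) : ℝ≥0∞ :=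
  ⨆ Q : DyadicCube n, coeff σ Q * ‖t Q‖₊

/-- The test sequence with `t_{R_j} = |R_j|^{s/n + 1/2 + τ - 1/p}` for
`R_j = [0,2^{-j})^n` (the dyadic cube with `k = 0`), and `t_Q = 0` otherwise. -/
noncomputable def testSeq (n : ℕ) (s τ p : ℝ) : DyadicCube n → ℂ := fun Q =>
  if Q.k = 0 then
    ((((2 : ℝ) ^ (-(Q.j : ℝ) * n)) ^ (s / n + 1 / 2 + τ - 1 / p) : ℝ) : ℂ)
  else 0

/-- The cube `R_j = [0, 2^{-j})^n`. -/
def Rcube (n : ℕ) (j : ℤ) : DyadicCube n := ⟨j, 0⟩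

-- ### auxiliary lemmas

instance {n : ℕ} : Countable (DyadicCube n) := by
  have h : Function.Injective (fun Q : DyadicCube n => (Q.j, Q.k)) := by
    rintro ⟨j1, k1⟩ ⟨j2, k2⟩ h; simpa using h
  exact h.countable

lemma toSet_pi {n : ℕ} (Q : DyadicCube n) : Q.toSet = Set.univ.pi
    (fun i => Set.Ico ((Q.k i : ℝ) * (2:ℝ) ^ (-Q.j)) (((Q.k i : ℝ) + 1) * (2:ℝ) ^ (-Q.j))) := by
  ext x; simp [DyadicCube.toSet, Set.mem_univ_pi, Set.mem_Ico]

lemma measSet {n : ℕ} (Q : DyadicCube n) : MeasurableSet Q.toSet := by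
  rw [toSet_pi]; exact MeasurableSet.univ_pi fun i => measurableSet_Ico

lemma two_rpow_ne_top (r : ℝ) : (2:ℝ≥0∞) ^ r ≠ ⊤ := by
  simp [ENNReal.rpow_eq_top_iff]

lemma two_rpow_ne_zero (r : ℝ) : (2:ℝ≥0∞) ^ r ≠ 0 := by
  simp [ENNReal.rpow_eq_zero_iff]

lemma volume_toSet {n : ℕ} (Q : DyadicCube n) : volume Q.toSet = Q.vol := by
  rw [toSet_pi, volume_pi_pi]
  have h1 : ∀ i : Fin n, volume (Set.Ico ((Q.k i : ℝ) * (2:ℝ) ^ (-Q.j))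
      (((Q.k i : ℝ) + 1) * (2:ℝ) ^ (-Q.j))) = ENNReal.ofReal ((2:ℝ) ^ (-Q.j)) := by
    intro i; rw [Real.volume_Ico]; congr 1; ring
  simp_rw [h1]
  rw [Finset.prod_const, Finset.card_univ, Fintype.card_fin]
  have h2 : ((2:ℝ) ^ (-Q.j) : ℝ) = (2:ℝ) ^ (((-Q.j : ℤ)) : ℝ) := (Real.rpow_intCast 2 (-Q.j)).symm
  rw [h2, ← ENNReal.ofReal_rpow_of_pos two_pos, ENNReal.ofReal_ofNat,
    ← ENNReal.rpow_natCast ((2:ℝ≥0∞) ^ (((-Q.j : ℤ)) : ℝ)) n, ← ENNReal.rpow_mul]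
  show _ = Q.vol
  unfold DyadicCube.vol
  congr 1; push_cast; ring

lemma vol_ne_zero {n : ℕ} (Q : DyadicCube n) : Q.vol ≠ 0 := two_rpow_ne_zero _
lemma vol_ne_top {n : ℕ} (Q : DyadicCube n) : Q.vol ≠ ⊤ := two_rpow_ne_top _

lemma meas_ind {n : ℕ} (Q : DyadicCube n) : Measurable (ind Q) :=
  measurable_const.indicator (measSet Q)

lemma ind_rpow {n : ℕ} (Q : DyadicCube n) (x : Fin n → ℝ) {e : ℝ} (he : 0 < e) (c : ℝ≥0∞) :
    (c * ind Q x) ^ e = c ^ e * ind Q x := by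
  unfold DyadicCube.ind
  by_cases hx : x ∈ Q.toSet
  · simp [Set.indicator_of_mem hx]
  · simp [Set.indicator_of_notMem hx, ENNReal.zero_rpow_of_pos he]

lemma finset_rpow_le {ι : Type*} {e : ℝ} (he : 1 ≤ e) (F : Finset ι) (b : ι → ℝ≥0∞) :
    ∑ i ∈ F, b i ^ e ≤ (∑ i ∈ F, b i) ^ e := by
  classical
  induction F using Finset.induction with
  | empty => simp [ENNReal.zero_rpow_of_pos (lt_of_lt_of_le zero_lt_one he)]
  | insert _ _ ha ih =>
    rw [Finset.sum_insert ha, Finset.sum_insert ha]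
    exact le_trans (add_le_add_right ih _) (ENNReal.add_rpow_le_rpow_add _ _ he)

lemma tsum_rpow_le {ι : Type*} (a : ι → ℝ≥0∞) {r : ℝ} (h0 : 0 < r) (h1 : r ≤ 1) :
    (∑' i, a i) ^ r ≤ ∑' i, a i ^ r := by
  have key : ∑' i, a i ≤ (∑' i, a i ^ r) ^ (1 / r) := by
    rw [ENNReal.tsum_eq_iSup_sum]
    apply iSup_le
    intro F
    have h2 : ∑ i ∈ F, a i = ∑ i ∈ F, (a i ^ r) ^ (1 / r) := by
      refine Finset.sum_congr rfl fun i _ => ?_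
      rw [one_div, ENNReal.rpow_rpow_inv h0.ne']
    rw [h2]
    refine le_trans (finset_rpow_le ?_ F fun i => a i ^ r) ?_
    · rw [le_div_iff₀ h0]; linarith
    · exact ENNReal.rpow_le_rpow (ENNReal.sum_le_tsum F) (by positivity)
  calc (∑' i, a i) ^ r ≤ ((∑' i, a i ^ r) ^ (1 / r)) ^ r := ENNReal.rpow_le_rpow key h0.le
    _ = ∑' i, a i ^ r := by rw [one_div, ENNReal.rpow_inv_rpow h0.ne']

lemma mem_Rcube {n : ℕ} {j : ℤ} {x : Fin n → ℝ} :
    x ∈ (Rcube n j).toSet ↔ ∀ i, 0 ≤ x i ∧ x i < (2:ℝ) ^ (-j) := by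
  unfold Rcube DyadicCube.toSet
  simp

lemma Rcube_mono {n : ℕ} {j j' : ℤ} (h : j' ≤ j) :
    (Rcube n j).toSet ⊆ (Rcube n j').toSet := by
  intro x hx
  rw [mem_Rcube] at *
  intro i
  refine ⟨(hx i).1, lt_of_lt_of_le (hx i).2 ?_⟩
  exact zpow_le_zpow_right₀ one_le_two (neg_le_neg h)

lemma eq_Rcube {n : ℕ} (Q : DyadicCube n) (hk : Q.k = 0) : Q = Rcube n Q.j := by
  obtain ⟨j, k⟩ := Q
  subst hk
  rfl

lemma subset_Rcube {n : ℕ} (hn : 0 < n) {j : ℤ} {P : DyadicCube n}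
    (h : (Rcube n j).toSet ⊆ P.toSet) : P.k = 0 ∧ P.j ≤ j := by
  have hpow : (0:ℝ) < (2:ℝ) ^ (-P.j) := by positivity
  have hz : (fun _ => (0:ℝ)) ∈ P.toSet := by
    apply h
    rw [mem_Rcube]; intro i
    exact ⟨le_refl 0, by positivity⟩
  have hk : P.k = 0 := by
    funext i
    have h1 : ((P.k i : ℝ)) * (2:ℝ) ^ (-P.j) ≤ 0 := (hz i).1
    have h2 : (0:ℝ) < ((P.k i : ℝ) + 1) * (2:ℝ) ^ (-P.j) := (hz i).2
    have h1' : (P.k i : ℝ) ≤ 0 := by nlinarith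
    have h2' : (0:ℝ) < (P.k i : ℝ) + 1 := by nlinarith
    have h1'' : P.k i ≤ 0 := by exact_mod_cast h1'
    have h2'' : (0:ℝ) < ((P.k i + 1 : ℤ) : ℝ) := by push_cast; linarith
    have h2''' : 0 < P.k i + 1 := by exact_mod_cast h2''
    show P.k i = 0
    omega
  refine ⟨hk, ?_⟩
  have hjpow : (0:ℝ) < (2:ℝ) ^ (-j) := by positivity
  have hx : (fun _ => (2:ℝ) ^ (-j) / 2) ∈ (Rcube n j).toSet := by
    rw [mem_Rcube]; intro i
    constructor
    · positivity
    · linarith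
  have hx' := h hx ⟨0, hn⟩
  have hlt : (2:ℝ) ^ (-j) / 2 < (2:ℝ) ^ (-P.j) := by
    have := hx'.2
    rw [hk] at this
    simpa using this
  have h2j : (2:ℝ) ^ (-j) / 2 = (2:ℝ) ^ (-j - 1) := by
    rw [zpow_sub₀ (two_ne_zero)]; norm_num
  rw [h2j] at hlt
  have := (zpow_lt_zpow_iff_right₀ (one_lt_two (α := ℝ))).mp hlt
  omega







lemma c_eval (n : ℕ) (s τ p : ℝ) (j : ℤ) :
    coeff s (Rcube n j) * ‖testSeq n s τ p (Rcube n j)‖₊ =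
      (2:ℝ≥0∞) ^ ((j:ℝ) * ((n:ℝ) * (1/p - τ))) := by
  have hb : (0:ℝ) < (2:ℝ) ^ (-(j:ℝ) * n) := Real.rpow_pos_of_pos two_pos _
  have hbb : (0:ℝ) < ((2:ℝ) ^ (-(j:ℝ) * n)) ^ (s / n + 1/2 + τ - 1/p) :=
    Real.rpow_pos_of_pos hb _
  have ht : testSeq n s τ p (Rcube n j)
      = ((((2:ℝ) ^ (-(j:ℝ) * n)) ^ (s / n + 1/2 + τ - 1/p) : ℝ) : ℂ) := by
    unfold testSeq Rcube; simp
  have hco : coeff s (Rcube n j) = ((2:ℝ≥0∞) ^ (-(j:ℝ) * n)) ^ (-(s/(n:ℝ)) - 1/2) := rfl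
  rw [ht, Complex.nnnorm_real, ← enorm_eq_nnnorm, Real.enorm_eq_ofReal hbb.le,
    ← ENNReal.ofReal_rpow_of_pos hb, ← ENNReal.ofReal_rpow_of_pos two_pos,
    ENNReal.ofReal_ofNat, hco, ← ENNReal.rpow_mul, ← ENNReal.rpow_mul,
    ← ENNReal.rpow_add _ _ (by norm_num) ENNReal.ofNat_ne_top]
  congr 1; ring

lemma meas_g {n : ℕ} (s : ℝ) (q : ℝ≥0∞) (hq : q ≠ ⊤) (t : DyadicCube n → ℂ) (P : DyadicCube n) :
    Measurable (fun x => lqSum q fun Q : {Q : DyadicCube n // Q.toSet ⊆ P.toSet} =>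
      coeff s Q.1 * ‖t Q.1‖₊ * ind Q.1 x) := by
  unfold lqSum
  simp only [if_neg hq]
  have h1 : Measurable (fun x => ∑' Q : {Q : DyadicCube n // Q.toSet ⊆ P.toSet},
      (coeff s Q.1 * ‖t Q.1‖₊ * ind Q.1 x) ^ q.toReal) := by
    apply Measurable.ennreal_tsum
    intro Q
    exact ((meas_ind Q.1).const_mul _).pow_const _
  exact h1.pow_const _

lemma holder_step {n : ℕ} {p q : ℝ} (τ : ℝ) (hp : 0 < p) (hpq : p < q) (P : DyadicCube n)
    {g : (Fin n → ℝ) → ℝ≥0∞} (hgm : Measurable g) :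
    P.vol ^ (-τ) * lpIntOn (ENNReal.ofReal p) P.toSet g ≤
      P.vol ^ (-(τ + 1/q - 1/p)) * lpIntOn (ENNReal.ofReal q) P.toSet g := by
  have hq : 0 < q := hp.trans hpq
  unfold lpIntOn
  rw [if_neg ENNReal.ofReal_ne_top, if_neg ENNReal.ofReal_ne_top,
    ENNReal.toReal_ofReal hp.le, ENNReal.toReal_ofReal hq.le]
  have hr : 1/((1/p - 1/q)⁻¹) = 1/p - 1/q := by rw [one_div, inv_inv]
  have key := ENNReal.lintegral_Lp_mul_le_Lq_mul_Lr (p := p) (q := q) (r := (1/p - 1/q)⁻¹)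
    hp hpq (by rw [hr]; ring) (volume.restrict P.toSet) hgm.aemeasurable
    (aemeasurable_const (b := (1:ℝ≥0∞)))
  simp only [Pi.mul_apply, mul_one, ENNReal.one_rpow, lintegral_one,
    Measure.restrict_apply_univ] at key
  rw [volume_toSet] at key
  calc P.vol ^ (-τ) * (∫⁻ x in P.toSet, g x ^ p) ^ (1/p)
      ≤ P.vol ^ (-τ) * ((∫⁻ x in P.toSet, g x ^ q) ^ (1/q) * P.vol ^ (1/(1/p - 1/q)⁻¹)) :=
        mul_le_mul_right key _
    _ = P.vol ^ (-(τ + 1/q - 1/p)) * (∫⁻ x in P.toSet, g x ^ q) ^ (1/q) := by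
        rw [mul_comm ((∫⁻ x in P.toSet, g x ^ q) ^ (1/q)), ← mul_assoc,
          ← ENNReal.rpow_add _ _ (vol_ne_zero P) (vol_ne_top P)]
        congr 2
        rw [hr]; ring

lemma integral_eval {n : ℕ} (s τ p : ℝ) (P : DyadicCube n) {e : ℝ} (he : 0 < e) :
    (∫⁻ x in P.toSet, ∑' Q : {Q : DyadicCube n // Q.toSet ⊆ P.toSet},
        (coeff s Q.1 * ‖testSeq n s τ p Q.1‖₊ * ind Q.1 x) ^ e)
      = ∑' Q : {Q : DyadicCube n // Q.toSet ⊆ P.toSet},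
          (coeff s Q.1 * ‖testSeq n s τ p Q.1‖₊) ^ e * Q.1.vol := by
  rw [lintegral_tsum (f := fun (Q : {Q : DyadicCube n // Q.toSet ⊆ P.toSet}) x =>
    (coeff s Q.1 * ‖testSeq n s τ p Q.1‖₊ * ind Q.1 x) ^ e)
    fun Q => (((meas_ind Q.1).const_mul _).pow_const e).aemeasurable]
  refine tsum_congr fun Q => ?_
  have h1 : ∀ x, (coeff s Q.1 * ‖testSeq n s τ p Q.1‖₊ * ind Q.1 x) ^ e
      = (coeff s Q.1 * ‖testSeq n s τ p Q.1‖₊) ^ e * ind Q.1 x :=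
    fun x => ind_rpow Q.1 x he _
  simp_rw [h1]
  rw [lintegral_const_mul _ (meas_ind Q.1)]
  congr 1
  unfold DyadicCube.ind
  rw [lintegral_indicator (measSet Q.1), setLIntegral_one, Measure.restrict_apply (measSet Q.1),
    Set.inter_eq_self_of_subset_left Q.2, volume_toSet]

lemma tsum_eval {n : ℕ} (hn : 0 < n) (s τ p : ℝ) (j0 : ℤ) {e : ℝ} (he : 0 < e) :
    (∑' Q : {Q : DyadicCube n // Q.toSet ⊆ (Rcube n j0).toSet},
        (coeff s Q.1 * ‖testSeq n s τ p Q.1‖₊) ^ e * Q.1.vol)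
      = ∑' m : ℕ, (2:ℝ≥0∞) ^ (((j0 + m : ℤ) : ℝ) * (e * ((n:ℝ) * (1/p - τ)) - n)) := by
  have hκsub : ∀ m : ℕ, (Rcube n (j0 + m)).toSet ⊆ (Rcube n j0).toSet :=
    fun m => Rcube_mono (by omega)
  set κ : ℕ → {Q : DyadicCube n // Q.toSet ⊆ (Rcube n j0).toSet} :=
    fun m => ⟨Rcube n (j0 + m), hκsub m⟩ with hκ
  have hκinj : Function.Injective κ := by
    intro a b h
    have h2 : (κ a).1.j = (κ b).1.j := by rw [h]
    simp only [hκ, Rcube] at h2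
    omega
  have hsupp : Function.support (fun Q : {Q : DyadicCube n // Q.toSet ⊆ (Rcube n j0).toSet} =>
      (coeff s Q.1 * ‖testSeq n s τ p Q.1‖₊) ^ e * Q.1.vol) ⊆ Set.range κ := by
    intro Q hQ
    have hk0 : Q.1.k = 0 := by
      by_contra hk
      apply hQ
      simp [testSeq, hk, ENNReal.zero_rpow_of_pos he]
    have hQR : Q.1 = Rcube n Q.1.j := eq_Rcube _ hk0
    have hQ2 : (Rcube n Q.1.j).toSet ⊆ (Rcube n j0).toSet := by
      have h3 := Q.2; rwa [hQR] at h3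
    have hj : j0 ≤ Q.1.j := (subset_Rcube hn hQ2).2
    refine ⟨(Q.1.j - j0).toNat, ?_⟩
    apply Subtype.ext
    simp only [hκ]
    have h4 : j0 + (((Q.1.j - j0).toNat : ℤ)) = Q.1.j := by omega
    rw [h4]
    exact hQR.symm
  rw [← Function.Injective.tsum_eq hκinj hsupp]
  refine tsum_congr fun m => ?_
  have h1 : (κ m).1 = Rcube n (j0 + m) := rfl
  rw [h1, c_eval]
  have h2 : (Rcube n (j0 + m)).vol = (2:ℝ≥0∞) ^ (-(((j0 + m : ℤ)):ℝ) * n) := rfl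
  rw [h2, ← ENNReal.rpow_mul, ← ENNReal.rpow_add _ _ (by norm_num) ENNReal.ofNat_ne_top]
  congr 1
  push_cast
  ring

lemma geom_eval (j0 : ℤ) (E : ℝ) :
    (∑' m : ℕ, (2:ℝ≥0∞) ^ (((j0 + m : ℤ) : ℝ) * E))
      = (2:ℝ≥0∞) ^ ((j0:ℝ) * E) * (1 - (2:ℝ≥0∞) ^ E)⁻¹ := by
  have h : ∀ m : ℕ, (2:ℝ≥0∞) ^ (((j0 + m : ℤ) : ℝ) * E)
      = (2:ℝ≥0∞) ^ ((j0:ℝ) * E) * ((2:ℝ≥0∞) ^ E) ^ m := by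
    intro m
    rw [← ENNReal.rpow_natCast ((2:ℝ≥0∞) ^ E) m, ← ENNReal.rpow_mul,
      ← ENNReal.rpow_add _ _ (by norm_num) ENNReal.ofNat_ne_top]
    congr 1; push_cast; ring
  simp_rw [h]
  rw [ENNReal.tsum_mul_left, ENNReal.tsum_geometric]


/-- for `s ∈ ℝ`, `p ∈ (0,∞)`, `q ∈ (p,∞)`, `τ ∈ (0, 1/p - 1/q]`, the
sequence space `ḃ^{s,τ+1/q-1/p}_{q,q}` (whose norm, with equal indices, is the
`∫_P Σ_{Q⊆P}` formula) embeds continuously into `ḟ^{s,τ}_{p,q}`, and the embedding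
is proper. -/
theorem stmt4 (n : ℕ) (hn : 0 < n) (s p q τ : ℝ)
    (hp : 0 < p) (hpq : p < q) (hτ : 0 < τ) (hτ' : τ ≤ 1 / p - 1 / q) :
    (∃ C : ℝ≥0∞, C ≠ ∞ ∧ ∀ t : DyadicCube n → ℂ,
        fNorm n s τ (ENNReal.ofReal p) (ENNReal.ofReal q) t ≤
          C * fNorm n s (τ + 1 / q - 1 / p) (ENNReal.ofReal q) (ENNReal.ofReal q) t) ∧
    ∃ t : DyadicCube n → ℂ,
      fNorm n s τ (ENNReal.ofReal p) (ENNReal.ofReal q) t ≠ ∞ ∧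
      fNorm n s (τ + 1 / q - 1 / p) (ENNReal.ofReal q) (ENNReal.ofReal q) t = ∞ := by
  have hq : 0 < q := hp.trans hpq
  have hnp : (0:ℝ) < n := Nat.cast_pos.mpr hn
  have hqE_top : (ENNReal.ofReal q) ≠ ⊤ := ENNReal.ofReal_ne_top
  have hpE_top : (ENNReal.ofReal p) ≠ ⊤ := ENNReal.ofReal_ne_top
  have hqE_toReal : (ENNReal.ofReal q).toReal = q := ENNReal.toReal_ofReal hq.le
  have hpE_toReal : (ENNReal.ofReal p).toReal = p := ENNReal.toReal_ofReal hp.le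
  constructor
  · refine ⟨1, one_ne_top, fun t => ?_⟩
    rw [one_mul]
    unfold fNorm
    refine iSup_le fun P => le_iSup_of_le P ?_
    exact holder_step τ hp hpq P (meas_g s (ENNReal.ofReal q) hqE_top t P)
  · refine ⟨testSeq n s τ p, ?_, ?_⟩
    · -- f-norm finite
      have hE : p * ((n:ℝ) * (1/p - τ)) - n = -(p * (n:ℝ) * τ) := by
        field_simp; ring
      have hrlt : (2:ℝ≥0∞) ^ (p * ((n:ℝ) * (1/p - τ)) - n) < 1 := by
        rw [hE]
        calc (2:ℝ≥0∞) ^ (-(p * (n:ℝ) * τ)) < 2 ^ (0:ℝ) :=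
              ENNReal.rpow_lt_rpow_of_exponent_lt one_lt_two ENNReal.ofNat_ne_top
                (neg_lt_zero.mpr (by positivity))
          _ = 1 := by simp
      have hc1top : ((1 - (2:ℝ≥0∞) ^ (p * ((n:ℝ) * (1/p - τ)) - n))⁻¹) ≠ ⊤ :=
        ENNReal.inv_ne_top.mpr (by rw [Ne, tsub_eq_zero_iff_le]; exact not_le.mpr hrlt)
      have hC0top : ((1 - (2:ℝ≥0∞) ^ (p * ((n:ℝ) * (1/p - τ)) - n))⁻¹) ^ (1/p) ≠ ⊤ :=
        ENNReal.rpow_ne_top_of_nonneg (by positivity) hc1top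
      refine ne_top_of_le_ne_top hC0top ?_
      unfold fNorm
      refine iSup_le fun P => ?_
      by_cases hPk : P.k = 0
      · obtain ⟨j0, rfl⟩ : ∃ j0, P = Rcube n j0 := ⟨P.j, eq_Rcube P hPk⟩
        have hpt : ∀ x : Fin n → ℝ,
            (lqSum (ENNReal.ofReal q)
              fun Q : {Q : DyadicCube n // Q.toSet ⊆ (Rcube n j0).toSet} =>
                coeff s Q.1 * ‖testSeq n s τ p Q.1‖₊ * ind Q.1 x) ^ p
            ≤ ∑' Q : {Q : DyadicCube n // Q.toSet ⊆ (Rcube n j0).toSet},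
                (coeff s Q.1 * ‖testSeq n s τ p Q.1‖₊ * ind Q.1 x) ^ p := by
          intro x
          unfold lqSum
          rw [if_neg hqE_top, hqE_toReal, ← ENNReal.rpow_mul]
          refine le_trans (tsum_rpow_le _ (by positivity) ?_) (le_of_eq ?_)
          · have h1 : 1/q * p = p/q := by ring
            rw [h1]
            exact div_le_one_of_le₀ hpq.le hq.le
          · refine tsum_congr fun Q => ?_
            rw [← ENNReal.rpow_mul]
            congr 1
            field_simp
        unfold lpIntOn
        rw [if_neg hpE_top, hpE_toReal]
        have hint : (∫⁻ x in (Rcube n j0).toSet,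
            (lqSum (ENNReal.ofReal q)
              fun Q : {Q : DyadicCube n // Q.toSet ⊆ (Rcube n j0).toSet} =>
                coeff s Q.1 * ‖testSeq n s τ p Q.1‖₊ * ind Q.1 x) ^ p)
            ≤ (2:ℝ≥0∞) ^ ((j0:ℝ) * (p * ((n:ℝ) * (1/p - τ)) - n)) *
                (1 - (2:ℝ≥0∞) ^ (p * ((n:ℝ) * (1/p - τ)) - n))⁻¹ := by
          refine le_trans (lintegral_mono fun x => hpt x) ?_
          rw [integral_eval s τ p _ hp, tsum_eval hn s τ p j0 hp, geom_eval]
        calc (Rcube n j0).vol ^ (-τ) * (∫⁻ x in (Rcube n j0).toSet,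
              (lqSum (ENNReal.ofReal q)
                fun Q : {Q : DyadicCube n // Q.toSet ⊆ (Rcube n j0).toSet} =>
                  coeff s Q.1 * ‖testSeq n s τ p Q.1‖₊ * ind Q.1 x) ^ p) ^ (1/p)
            ≤ (Rcube n j0).vol ^ (-τ) *
                ((2:ℝ≥0∞) ^ ((j0:ℝ) * (p * ((n:ℝ) * (1/p - τ)) - n)) *
                  (1 - (2:ℝ≥0∞) ^ (p * ((n:ℝ) * (1/p - τ)) - n))⁻¹) ^ (1/p) :=
              mul_le_mul_right (ENNReal.rpow_le_rpow hint (by positivity)) _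
          _ ≤ ((1 - (2:ℝ≥0∞) ^ (p * ((n:ℝ) * (1/p - τ)) - n))⁻¹) ^ (1/p) := by
              rw [ENNReal.mul_rpow_of_nonneg _ _ (by positivity : (0:ℝ) ≤ 1/p),
                ← ENNReal.rpow_mul]
              have hv : (Rcube n j0).vol ^ (-τ) = (2:ℝ≥0∞) ^ ((j0:ℝ) * n * τ) := by
                show ((2:ℝ≥0∞) ^ (-((j0:ℤ):ℝ) * n)) ^ (-τ) = _
                rw [← ENNReal.rpow_mul]
                congr 1; ring
              rw [hv, ← mul_assoc,
                ← ENNReal.rpow_add _ _ (by norm_num) ENNReal.ofNat_ne_top]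
              have hzero : (j0:ℝ) * n * τ + (j0:ℝ) * (p * ((n:ℝ) * (1/p - τ)) - n) * (1/p)
                  = 0 := by field_simp; ring
              rw [hzero, ENNReal.rpow_zero, one_mul]
      · have hzero : ∀ (Q : {Q : DyadicCube n // Q.toSet ⊆ P.toSet}) (x : Fin n → ℝ),
            coeff s Q.1 * ‖testSeq n s τ p Q.1‖₊ * ind Q.1 x = 0 := by
          intro Q x
          by_cases hk : Q.1.k = 0
          · refine absurd ?_ hPk
            have h3 := Q.2
            rw [eq_Rcube Q.1 hk] at h3
            exact (subset_Rcube hn h3).1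
          · simp [testSeq, hk]
        unfold lpIntOn lqSum
        rw [if_neg hpE_top, hpE_toReal]
        simp only [if_neg hqE_top, hqE_toReal]
        simp_rw [hzero]
        simp only [ENNReal.zero_rpow_of_pos hq, tsum_zero,
          ENNReal.zero_rpow_of_pos (by positivity : (0:ℝ) < 1/q),
          ENNReal.zero_rpow_of_pos hp, lintegral_zero,
          ENNReal.zero_rpow_of_pos (by positivity : (0:ℝ) < 1/p), mul_zero]
        exact zero_le
    · -- b-side norm infinite
      rw [eq_top_iff]
      unfold fNorm
      refine le_trans ?_ (le_iSup _ (Rcube n 0))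
      have hvol : (Rcube n 0).vol = 1 := by
        show (2:ℝ≥0∞) ^ (-(((0:ℤ)):ℝ) * n) = 1
        norm_num
      rw [hvol, ENNReal.one_rpow, one_mul]
      unfold lpIntOn lqSum
      simp only [if_neg hqE_top, hqE_toReal]
      have hinner : ∀ x : Fin n → ℝ,
          ((∑' Q : {Q : DyadicCube n // Q.toSet ⊆ (Rcube n 0).toSet},
            (coeff s Q.1 * ‖testSeq n s τ p Q.1‖₊ * ind Q.1 x) ^ q) ^ (1/q)) ^ q
          = ∑' Q : {Q : DyadicCube n // Q.toSet ⊆ (Rcube n 0).toSet},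
            (coeff s Q.1 * ‖testSeq n s τ p Q.1‖₊ * ind Q.1 x) ^ q := by
        intro x
        rw [one_div, ENNReal.rpow_inv_rpow hq.ne']
      simp_rw [hinner]
      rw [integral_eval s τ p _ hq, tsum_eval hn s τ p 0 hq]
      have hterms : ∀ m : ℕ, (1:ℝ≥0∞) ≤
          2 ^ ((((0:ℤ) + m : ℤ) : ℝ) * (q * ((n:ℝ) * (1/p - τ)) - n)) := by
        intro m
        have h2 : (0:ℝ) ≤ q * ((n:ℝ) * (1/p - τ)) - n := by
          have hge : q * ((n:ℝ) * (1/q)) ≤ q * ((n:ℝ) * (1/p - τ)) := by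
            gcongr
            linarith
          have heq : q * ((n:ℝ) * (1/q)) = n := by field_simp
          linarith
        calc (1:ℝ≥0∞) = 2 ^ (0:ℝ) := by simp
          _ ≤ _ := ENNReal.rpow_le_rpow_of_exponent_le one_le_two
              (mul_nonneg (by push_cast; positivity) h2)
      have htop : (∑' m : ℕ, (2:ℝ≥0∞) ^
          ((((0:ℤ) + m : ℤ) : ℝ) * (q * ((n:ℝ) * (1/p - τ)) - n))) = ⊤ := by
        rw [eq_top_iff]
        calc (⊤:ℝ≥0∞) = ∑' _ : ℕ, (1:ℝ≥0∞) :=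
              (tsum_const_eq_top_of_ne_zero one_ne_zero).symm
          _ ≤ _ := ENNReal.tsum_le_tsum hterms
      rw [htop, ENNReal.top_rpow_of_pos (by positivity)]
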